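/- Let y(x) := (1 − w(x))^{-1} ∈ ℚ[[x]]. Then x · y′(x) = y(x)² · (y(x) − 1) in ℚ[[x]]; that is, ∇_x y = (y² − y) · y, which expresses the operator identity L∇_x = (y² − y)∇_y L of the change of variables x ↦ y. -/

import Mathlib

section AbelAux
open Finset Polynomial

lemma altSum (n : ℕ) : ∀ p : Polynomial ℚ, p.natDegree < n →
    ∑ k ∈ Finset.range (n+1), (-1:ℚ)^k * (n.choose k) * p.eval (k:ℚ) = 0 := by
  induction n with
  | zero => intro p hp; omega
  | succ n ih =>
    intro p hp
    set q : Polynomial ℚ := p.comp (X + 1) - p with hq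
    have hqeval : ∀ k : ℕ, q.eval (k:ℚ) = p.eval ((k:ℚ)+1) - p.eval (k:ℚ) := by
      intro k; simp [hq, eval_comp]
    have key : ∑ k ∈ Finset.range (n+2), (-1:ℚ)^k * ((n+1).choose k) * p.eval (k:ℚ)
        = - ∑ k ∈ Finset.range (n+1), (-1:ℚ)^k * (n.choose k) * q.eval (k:ℚ) := by
      rw [Finset.sum_range_succ']
      have h1 : ∀ k ∈ Finset.range (n+1),
          (-1:ℚ)^(k+1) * ((n+1).choose (k+1)) * p.eval ((k+1:ℕ):ℚ)
          = -((-1:ℚ)^k * (n.choose k) * p.eval ((k:ℚ)+1))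
            + (-1:ℚ)^(k+1) * (n.choose (k+1)) * p.eval ((k+1:ℕ):ℚ) := by
        intro k _
        rw [Nat.choose_succ_succ]
        push_cast
        ring
      rw [Finset.sum_congr rfl h1, Finset.sum_add_distrib]
      have h2 : ∑ k ∈ Finset.range (n+1), (-1:ℚ)^(k+1) * (n.choose (k+1)) * p.eval ((k+1:ℕ):ℚ)
          = ∑ k ∈ Finset.range (n+2), (-1:ℚ)^k * (n.choose k) * p.eval (k:ℚ)
            - (-1:ℚ)^0 * (n.choose 0) * p.eval ((0:ℕ):ℚ) := by
        rw [Finset.sum_range_succ' (fun k => (-1:ℚ)^k * (n.choose k) * p.eval (k:ℚ)) (n+1)]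
        ring
      have h3 : ∑ k ∈ Finset.range (n+2), (-1:ℚ)^k * (n.choose k) * p.eval (k:ℚ)
          = ∑ k ∈ Finset.range (n+1), (-1:ℚ)^k * (n.choose k) * p.eval (k:ℚ) := by
        rw [Finset.sum_range_succ]
        simp [Nat.choose_succ_self]
      rw [h2, h3]
      simp only [hqeval, neg_mul, Finset.sum_neg_distrib]
      simp only [mul_sub, Finset.sum_sub_distrib, Nat.choose_zero_right]
      push_cast
      ring
    rw [key]
    by_cases hq0 : q = 0
    · simp [hq0]
    · have hd : q.natDegree < n := by
        have hp0 : p ≠ 0 := by rintro rfl; simp [hq] at hq0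
        have hpc : p.natDegree ≠ 0 := by
          intro h0
          obtain ⟨a, rfl⟩ := Polynomial.natDegree_eq_zero.mp h0
          simp [hq] at hq0
        have hcompdeg : (p.comp (X + 1)).natDegree = p.natDegree := by
          have : (X + 1 : Polynomial ℚ).natDegree = 1 := by
            simpa using Polynomial.natDegree_X_add_C (1:ℚ)
          rw [Polynomial.natDegree_comp, this, mul_one]
        have hlc : (p.comp (X + 1)).leadingCoeff = p.leadingCoeff := by
          have h1 : (X + 1 : Polynomial ℚ).natDegree ≠ 0 := by
            simpa using Polynomial.natDegree_X_add_C (1:ℚ) ▸ one_ne_zero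
          rw [Polynomial.leadingCoeff_comp h1]
          have : (X + 1 : Polynomial ℚ).leadingCoeff = 1 := by
            simpa using Polynomial.leadingCoeff_X_add_C (1:ℚ)
          rw [this, one_pow, mul_one]
        have hcomp0 : p.comp (X + 1) ≠ 0 := by
          rw [← Polynomial.leadingCoeff_ne_zero, hlc, Polynomial.leadingCoeff_ne_zero]
          exact hp0
        have hdeg : (p.comp (X+1)).degree = p.degree := by
          rw [Polynomial.degree_eq_natDegree hcomp0, Polynomial.degree_eq_natDegree hp0, hcompdeg]
        have hlt : q.degree < p.degree := by
          have := Polynomial.degree_sub_lt hdeg hcomp0 hlc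
          rwa [hdeg] at this
        have : q.natDegree < p.natDegree := Polynomial.natDegree_lt_natDegree hq0 hlt
        omega
      rw [ih q hd, neg_zero]

lemma altSumPow (n d : ℕ) (hd : d < n) :
    ∑ k ∈ Finset.range (n+1), (-1:ℚ)^k * (n.choose k) * (k:ℚ)^d = 0 := by
  have := altSum n (X^d) (by simpa using hd)
  simpa using this

lemma abelPoly (n : ℕ) (hn : 1 ≤ n) :
    ∑ k ∈ Finset.Icc 1 n, C ((n.choose k : ℚ) * (k:ℚ)^(k-1)) * (X - C (k:ℚ))^(n-k)
      = C (n:ℚ) * X^(n-1) := by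
  induction n, hn using Nat.le_induction with
  | base => simp
  | succ n hn ih =>
    set B : Polynomial ℚ := ∑ k ∈ Finset.Icc 1 (n+1),
      C (((n+1).choose k : ℚ) * (k:ℚ)^(k-1)) * (X - C (k:ℚ))^(n+1-k) with hB
    set R : Polynomial ℚ := C ((n+1:ℕ):ℚ) * X^(n+1-1) with hR
    have hderB : derivative B = C ((n+1:ℕ):ℚ) * (C (n:ℚ) * X^(n-1)) := by
      rw [hB, derivative_sum]
      have hterm : ∀ k ∈ Finset.Icc 1 (n+1),
          derivative (C (((n+1).choose k : ℚ) * (k:ℚ)^(k-1)) * (X - C (k:ℚ))^(n+1-k))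
          = C ((n+1:ℕ):ℚ) * (C ((n.choose k : ℚ) * (k:ℚ)^(k-1)) * (X - C (k:ℚ))^(n-k)) := by
        intro k hk
        simp only [Finset.mem_Icc] at hk
        rw [derivative_C_mul, derivative_X_sub_C_pow]
        rcases Nat.eq_or_lt_of_le hk.2 with he | hlt
        · subst he
          simp
        · have hk2 : k ≤ n := by omega
          have h1 : n + 1 - k - 1 = n - k := by omega
          have h2 : (((n+1).choose k : ℚ) * (k:ℚ)^(k-1)) * ((n+1-k:ℕ):ℚ)
              = ((n+1:ℕ):ℚ) * ((n.choose k : ℚ) * (k:ℚ)^(k-1)) := by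
            have hq : ((n.choose k:ℚ)) * ((n+1:ℕ):ℚ) = (((n+1).choose k : ℚ)) * ((n+1-k:ℕ):ℚ) := by
              exact_mod_cast congrArg (Nat.cast : ℕ → ℚ) (Nat.choose_mul_succ_eq n k)
            linear_combination (-(k:ℚ)^(k-1)) * hq
          have h4 : C (((n+1).choose k : ℚ) * (k:ℚ)^(k-1)) * C ((n+1-k:ℕ):ℚ)
              = C ((n+1:ℕ):ℚ) * C ((n.choose k : ℚ) * (k:ℚ)^(k-1)) := by
            rw [← C_mul, ← C_mul, h2]
          rw [h1]
          linear_combination ((X - C (k:ℚ))^(n-k)) * h4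
      rw [Finset.sum_congr rfl hterm, ← Finset.mul_sum]
      have hIcc : ∑ k ∈ Finset.Icc 1 (n+1),
          C ((n.choose k : ℚ) * (k:ℚ)^(k-1)) * (X - C (k:ℚ))^(n-k)
          = ∑ k ∈ Finset.Icc 1 n,
          C ((n.choose k : ℚ) * (k:ℚ)^(k-1)) * (X - C (k:ℚ))^(n-k) := by
        rw [← Finset.Ico_add_one_right_eq_Icc, Finset.sum_Ico_succ_top (by omega), Finset.Ico_add_one_right_eq_Icc]
        simp [Nat.choose_succ_self]
      rw [hIcc, ih]
    have hderR : derivative R = C ((n+1:ℕ):ℚ) * (C (n:ℚ) * X^(n-1)) := by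
      rw [hR, derivative_C_mul, derivative_X_pow]
      norm_num
    have hd0 : derivative (B - R) = 0 := by
      rw [derivative_sub, hderB, hderR, sub_self]
    have hconst : B - R = C ((B - R).coeff 0) :=
      Polynomial.eq_C_of_natDegree_eq_zero
        (Polynomial.natDegree_eq_zero_of_derivative_eq_zero hd0)
    have heval : (B - R).eval 0 = 0 := by
      rw [eval_sub]
      have hBe : B.eval 0
          = ∑ k ∈ Finset.Icc 1 (n+1), (((n+1).choose k : ℚ) * (k:ℚ)^(k-1)) * (-(k:ℚ))^(n+1-k) := by
        rw [hB, eval_finset_sum]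
        apply Finset.sum_congr rfl
        intro k hk
        simp only [eval_mul, eval_C, eval_pow, eval_sub, eval_X, zero_sub]
      have hsum0 : ∑ k ∈ Finset.Icc 1 (n+1),
          (((n+1).choose k : ℚ) * (k:ℚ)^(k-1)) * (-(k:ℚ))^(n+1-k) = 0 := by
        have h1 : ∀ k ∈ Finset.Icc 1 (n+1),
            (((n+1).choose k : ℚ) * (k:ℚ)^(k-1)) * (-(k:ℚ))^(n+1-k)
            = (-1:ℚ)^(n+1) * ((-1:ℚ)^k * (((n+1).choose k : ℚ)) * (k:ℚ)^n) := by
          intro k hk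
          simp only [Finset.mem_Icc] at hk
          have e1 : (-(k:ℚ))^(n+1-k) = (-1:ℚ)^(n+1-k) * (k:ℚ)^(n+1-k) := by
            rw [neg_pow]
          have e2 : (k:ℚ)^(k-1) * (k:ℚ)^(n+1-k) = (k:ℚ)^n := by
            rw [← pow_add]; congr 1; omega
          have e3 : (-1:ℚ)^(n+1-k) * (-1:ℚ)^k = (-1:ℚ)^(n+1) := by
            rw [← pow_add]; congr 1; omega
          have e4 : (-1:ℚ)^k * (-1:ℚ)^k = 1 := by
            rw [← pow_add]
            exact Even.neg_one_pow ⟨k, rfl⟩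
          have e5 : (-1:ℚ)^(n+1-k) = (-1:ℚ)^(n+1) * (-1:ℚ)^k := by
            calc (-1:ℚ)^(n+1-k) = (-1:ℚ)^(n+1-k) * ((-1:ℚ)^k * (-1:ℚ)^k) := by rw [e4, mul_one]
              _ = ((-1:ℚ)^(n+1-k) * (-1:ℚ)^k) * (-1:ℚ)^k := by ring
              _ = (-1:ℚ)^(n+1) * (-1:ℚ)^k := by rw [e3]
          rw [e1, e5]
          linear_combination ((((n+1).choose k : ℚ)) * (-1:ℚ)^(n+1) * (-1:ℚ)^k) * e2
        rw [Finset.sum_congr rfl h1, ← Finset.mul_sum]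
        have h2 : ∑ k ∈ Finset.Icc 1 (n+1), (-1:ℚ)^k * (((n+1).choose k : ℚ)) * (k:ℚ)^n = 0 := by
          have h3 := altSumPow (n+1) n (by omega)
          rw [Finset.range_eq_Ico, Finset.sum_eq_sum_Ico_succ_bot (by omega)] at h3
          rw [← Finset.Ico_add_one_right_eq_Icc]
          have h0 : (-1:ℚ)^0 * (((n+1).choose 0 : ℚ)) * ((0:ℕ):ℚ)^n = 0 := by
            simp [zero_pow (by omega : n ≠ 0)]
          rw [h0, zero_add] at h3
          exact h3
        rw [h2, mul_zero]
      have hRe : R.eval 0 = 0 := by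
        rw [hR, eval_mul, eval_pow, eval_X, eval_C]
        rw [zero_pow (by omega : n + 1 - 1 ≠ 0), mul_zero]
      rw [hBe, hsum0, hRe, sub_zero]
    have hc0 : (B - R).coeff 0 = 0 := by
      have h := heval
      rw [hconst] at h
      simpa using h
    have hzero : B - R = 0 := by rw [hconst, hc0, map_zero]
    exact sub_eq_zero.mp hzero

lemma abelNum (n : ℕ) (hn : 1 ≤ n) :
    ∑ k ∈ Finset.Icc 1 n, (n.choose k : ℚ) * (k:ℚ)^(k-1) * ((n:ℚ) - (k:ℚ))^(n-k)
      = (n:ℚ)^n := by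
  have h := congrArg (Polynomial.eval ((n:ℚ))) (abelPoly n hn)
  rw [eval_finset_sum] at h
  simp only [eval_mul, eval_C, eval_pow, eval_sub, eval_X] at h
  rw [h]
  rw [← pow_succ']
  congr 1
  omega

lemma abelNum2 (m : ℕ) (hm : 1 ≤ m) :
    ∑ a ∈ Finset.Ico 1 m, (m.choose a : ℚ) * (a:ℚ)^a * (((m-a:ℕ)):ℚ)^(m-a-1)
      = (m:ℚ)^m - (m:ℚ)^(m-1) := by
  have h := abelNum m hm
  rw [← Finset.Ico_add_one_right_eq_Icc, Finset.sum_Ico_succ_top hm] at h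
  have htop : (m.choose m : ℚ) * (m:ℚ)^(m-1) * ((m:ℚ) - (m:ℚ))^(m-m) = (m:ℚ)^(m-1) := by
    simp
  rw [htop] at h
  have hre : ∑ k ∈ Finset.Ico 1 m, (m.choose k : ℚ) * (k:ℚ)^(k-1) * ((m:ℚ) - (k:ℚ))^(m-k)
      = ∑ a ∈ Finset.Ico 1 m, (m.choose a : ℚ) * (a:ℚ)^a * (((m-a:ℕ)):ℚ)^(m-a-1) := by
    apply Finset.sum_nbij' (i := fun k => m - k) (j := fun a => m - a)
    · intro k hk; simp only [Finset.mem_Ico] at hk ⊢; omega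
    · intro a ha; simp only [Finset.mem_Ico] at ha ⊢; omega
    · intro k hk; simp only [Finset.mem_Ico] at hk; omega
    · intro a ha; simp only [Finset.mem_Ico] at ha; omega
    · intro k hk
      simp only [Finset.mem_Ico] at hk
      have hk1 : 1 ≤ k := hk.1
      have hk2 : k ≤ m := le_of_lt hk.2
      have c1 : m.choose (m - k) = m.choose k := Nat.choose_symm hk2
      have c2 : m - (m - k) = k := by omega
      have c3 : ((m - k : ℕ) : ℚ) = (m:ℚ) - (k:ℚ) := by
        push_cast [Nat.cast_sub hk2]; ring
      rw [c1, c2, c3]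
      ring
  rw [hre] at h
  linarith [h]

lemma convNum (m : ℕ) (hm : 1 ≤ m) :
    ∑ a ∈ Finset.Ico 1 m,
      ((a:ℚ)^(a-1) / (a.factorial : ℚ) * (a:ℚ)) * (((m-a:ℕ):ℚ)^(m-a-1) / ((m-a).factorial : ℚ))
      = (m:ℚ)^(m-1) / (m.factorial : ℚ) * (m:ℚ) - (m:ℚ)^(m-1) / (m.factorial : ℚ) := by
  have hterm : ∀ a ∈ Finset.Ico 1 m,
      ((a:ℚ)^(a-1) / (a.factorial : ℚ) * (a:ℚ)) * (((m-a:ℕ):ℚ)^(m-a-1) / ((m-a).factorial : ℚ))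
      = (m.choose a : ℚ) * (a:ℚ)^a * (((m-a:ℕ)):ℚ)^(m-a-1) / (m.factorial : ℚ) := by
    intro a ha
    simp only [Finset.mem_Ico] at ha
    have ha2 : a ≤ m := le_of_lt ha.2
    have hfac : (m.factorial : ℚ) = (m.choose a : ℚ) * (a.factorial : ℚ) * ((m-a).factorial : ℚ) := by
      exact_mod_cast congrArg (Nat.cast : ℕ → ℚ)
        (Nat.choose_mul_factorial_mul_factorial ha2).symm
    have hpow : (a:ℚ)^(a-1) * (a:ℚ) = (a:ℚ)^a := by
      rw [← pow_succ]
      congr 1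
      omega
    have h1 : (a.factorial : ℚ) ≠ 0 := Nat.cast_ne_zero.mpr a.factorial_ne_zero
    have h2 : ((m-a).factorial : ℚ) ≠ 0 := Nat.cast_ne_zero.mpr (m-a).factorial_ne_zero
    have h3 : (m.factorial : ℚ) ≠ 0 := Nat.cast_ne_zero.mpr m.factorial_ne_zero
    have hc : ((m-a:ℕ):ℚ) = (m:ℚ) - (a:ℚ) := by
      push_cast [Nat.cast_sub ha2]; ring
    rw [hc]
    field_simp
    rw [hfac]
    linear_combination ((m:ℚ) - (a:ℚ))^(m-a-1) * ((m.choose a : ℚ) * (a.factorial:ℚ) * ((m-a).factorial:ℚ)) * hpow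
  rw [Finset.sum_congr rfl hterm, ← Finset.sum_div, abelNum2 m hm]
  have hpm : (m:ℚ)^(m-1) * (m:ℚ) = (m:ℚ)^m := by
    rw [← pow_succ]
    congr 1
    omega
  rw [div_mul_eq_mul_div, hpm, div_sub_div_same]

end AbelAux

open PowerSeries

/-- The rooted tree series `w(x) = Σ_{m≥1} (m^{m-1}/m!) x^m ∈ ℚ⟦x⟧`. -/
noncomputable def rootedTree : ℚ⟦X⟧ :=
  PowerSeries.mk fun m => if m = 0 then 0 else (m : ℚ) ^ (m - 1) / m.factorial

/-- The series `y(x) = (1 − w(x))⁻¹ ∈ ℚ⟦x⟧`. -/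
noncomputable def ySeries : ℚ⟦X⟧ := (1 - rootedTree)⁻¹

open Finset in
lemma key : (X : ℚ⟦X⟧) * PowerSeries.derivativeFun rootedTree * (1 - rootedTree) = rootedTree := by
  rw [mul_assoc]
  ext n
  cases n with
  | zero =>
    rw [PowerSeries.coeff_zero_eq_constantCoeff, map_mul, constantCoeff_X, zero_mul]
    simp [rootedTree]
  | succ n =>
    rw [PowerSeries.coeff_succ_X_mul]
    rw [mul_sub, mul_one, map_sub]
    rw [PowerSeries.coeff_mul, Finset.Nat.sum_antidiagonal_eq_sum_range_succ_mk]
    simp only [show ∀ f : ℚ⟦X⟧, f.derivativeFun = d⁄dX ℚ f from fun _ => rfl, PowerSeries.coeff_derivative]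
    simp only [rootedTree, PowerSeries.coeff_mk]
    rw [Finset.sum_range_succ]
    simp only [Nat.sub_self, if_pos rfl, mul_zero, add_zero]
    have hre : ∑ k ∈ Finset.range n,
        ((if k + 1 = 0 then 0 else ((k+1:ℕ):ℚ)^(k+1-1) / (k+1).factorial) * ((k:ℚ)+1)) *
          (if n - k = 0 then 0 else ((n-k:ℕ):ℚ)^(n-k-1) / (n-k).factorial)
        = ∑ a ∈ Finset.Ico 1 (n+1),
        ((a:ℚ)^(a-1) / (a.factorial : ℚ) * (a:ℚ)) * (((n+1-a:ℕ):ℚ)^(n+1-a-1) / ((n+1-a).factorial : ℚ)) := by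
      rw [Finset.sum_Ico_eq_sum_range]
      simp only [Nat.add_sub_cancel]
      apply Finset.sum_congr rfl
      intro k hk
      simp only [Finset.mem_range] at hk
      have e0 : 1 + k = k + 1 := by omega
      have e1 : (k + 1 ≠ 0) := by omega
      have e2 : n - k ≠ 0 := by omega
      have e3 : n + 1 - (k + 1) = n - k := by omega
      rw [if_neg e1, if_neg e2, e0, e3]
      simp only [Nat.add_sub_cancel]
      push_cast
      ring
    rw [hre, convNum (n+1) (by omega)]
    rw [if_neg (by omega : n + 1 ≠ 0)]
    push_cast
    ring


/-- `x · y′(x) = y(x)² · (y(x) − 1)`, i.e. `∇_x y = (y² − y) · y`: the change of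
variables `x ↦ y` satisfies the operator identity `L∇_x = (y² − y)∇_y L`. -/
theorem nabla_ySeries :
    PowerSeries.X * PowerSeries.derivativeFun ySeries = ySeries ^ 2 * (ySeries - 1) := by
  have hu : constantCoeff (1 - rootedTree) ≠ 0 := by
    rw [map_sub, map_one]
    have : constantCoeff rootedTree = 0 := by
      rw [← PowerSeries.coeff_zero_eq_constantCoeff]
      simp [rootedTree]
    rw [this]
    norm_num
  have huy : (1 - rootedTree) * ySeries = 1 := PowerSeries.mul_inv_cancel _ hu
  have hder : PowerSeries.derivativeFun ySeries
      = ySeries ^ 2 * PowerSeries.derivativeFun rootedTree := by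
    have h1 : PowerSeries.derivativeFun ySeries = d⁄dX ℚ (1 - rootedTree)⁻¹ := rfl
    rw [h1, PowerSeries.derivative_inv']
    have h2 : d⁄dX ℚ (1 - rootedTree) = - d⁄dX ℚ rootedTree := by
      rw [map_sub, Derivation.map_one_eq_zero, zero_sub]
    rw [h2]
    have h3 : d⁄dX ℚ rootedTree = PowerSeries.derivativeFun rootedTree := rfl
    rw [h3]
    unfold ySeries
    ring
  have hym : ySeries - 1 = rootedTree * ySeries := by
    linear_combination huy
  have hxw : (X : ℚ⟦X⟧) * PowerSeries.derivativeFun rootedTree = rootedTree * ySeries := by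
    linear_combination (-((X:ℚ⟦X⟧) * PowerSeries.derivativeFun rootedTree)) * huy + ySeries * key
  rw [hder, hym]
  linear_combination ySeries^2 * hxw
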